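/- For all nonempty strings v and u over the alphabet V, the lengths of the shortest admissible grammars satisfy L^m(v) ≤ L^m(vu) + L^{>1}(vu) and L^m(u) ≤ L^m(vu) + L^{>1}(vu), where vu denotes the concatenation of v and u. -/

import Mathlib

/-- Expansion of a string of terminals (`Sum.inl`) and nonterminals (`Sum.inr j`,
a reference to the `j`-th production in `prods`), with recursion depth bounded
by `fuel`. -/
def expandStr {V : Type*} (prods : List (List (V ⊕ ℕ))) : ℕ → List (V ⊕ ℕ) → List V
  | 0, _ => []
  | fuel + 1, g =>
      (g.map fun s =>
        match s with
        | Sum.inl a => [a]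
        | Sum.inr j => expandStr prods fuel (prods.getD j [])).flatten

/-- An admissible grammar over the terminal alphabet `V`: a nonempty list of
productions `g_0, g_1, …, g_k` (the production of nonterminal `b_i` being
`prods[i]`), each production a nonempty string of terminals and nonterminals,
where the production of `b_i` may refer only to nonterminals `b_j` with
`i < j ≤ k`.  The dependence among nonterminals is thus acyclic, so every
nonterminal expands, by recursively substituting productions, into a unique
finite string of terminals. -/
structure AdmissibleGrammar (V : Type*) where
  prods : List (List (V ⊕ ℕ))
  prods_ne : prods ≠ []
  prod_ne : ∀ g ∈ prods, g ≠ []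
  refs : ∀ i, i < prods.length → ∀ j, Sum.inr j ∈ prods.getD i [] →
    i < j ∧ j < prods.length

namespace AdmissibleGrammar

/-- The string of terminals into which the initial nonterminal `b_0` expands.
(Since references go strictly upwards, recursion depth `prods.length`
suffices to expand everything.) -/
def expansion {V : Type*} (G : AdmissibleGrammar V) : List V :=
  expandStr G.prods G.prods.length (G.prods.getD 0 [])

/-- `G` is an admissible grammar for the string `v`. -/
def IsFor {V : Type*} (G : AdmissibleGrammar V) (v : List V) : Prop :=
  G.expansion = v

/-- The length of the grammar: the total number of terminal and nonterminal
symbol tokens in all its productions. -/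
def len {V : Type*} (G : AdmissibleGrammar V) : ℕ :=
  (G.prods.map List.length).sum

/-- The total length of the non-initial productions of `G`
(the length of the vocabulary of `G`). -/
def vocabLen {V : Type*} (G : AdmissibleGrammar V) : ℕ :=
  ((G.prods.drop 1).map List.length).sum

end AdmissibleGrammar

/-- `Lm v`: the minimal length of an admissible grammar for `v`. -/
noncomputable def Lm {V : Type*} (v : List V) : ℕ :=
  sInf {n | ∃ G : AdmissibleGrammar V, G.IsFor v ∧ G.len = n}

/-- `LgtOne v`: the maximal length of a string occurring at two or more
distinct (possibly overlapping) positions in `v`; `0` if there is none. -/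
noncomputable def LgtOne {V : Type*} (v : List V) : ℕ :=
  sSup {n | ∃ w : List V, w.length = n ∧
    ∃ i j : ℕ, i ≠ j ∧ w <+: v.drop i ∧ w <+: v.drop j}

open List

namespace GramAux

variable {V : Type*}

/-- The production of nonterminal `i`. -/
def gP (G : AdmissibleGrammar V) (i : ℕ) : List (V ⊕ ℕ) := G.prods.getD i []

lemma len_pos (G : AdmissibleGrammar V) : 0 < G.prods.length :=
  List.length_pos_iff.2 G.prods_ne

lemma gP_mem (G : AdmissibleGrammar V) {i : ℕ} (hi : i < G.prods.length) :
    gP G i ∈ G.prods := by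
  rw [gP, List.getD_eq_getElem _ _ hi]; exact List.getElem_mem hi

lemma gP_ne (G : AdmissibleGrammar V) {i : ℕ} (hi : i < G.prods.length) :
    gP G i ≠ [] := G.prod_ne _ (gP_mem G hi)

lemma refs' (G : AdmissibleGrammar V) {i j : ℕ} (hj : Sum.inr j ∈ gP G i) :
    i < j ∧ j < G.prods.length := by
  by_cases hi : i < G.prods.length
  · exact G.refs i hi j hj
  · exfalso
    rw [gP, List.getD_eq_default] at hj
    · simp at hj
    · omega

lemma expandStr_succ (G : AdmissibleGrammar V) (k : ℕ) (g : List (V ⊕ ℕ)) :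
    expandStr G.prods (k+1) g =
      (g.map fun s =>
        match s with
        | Sum.inl a => [a]
        | Sum.inr j => expandStr G.prods k (G.prods.getD j [])).flatten := rfl

lemma stab (G : AdmissibleGrammar V) : ∀ k (i : ℕ) (g : List (V ⊕ ℕ)), 1 ≤ k →
    G.prods.length - i ≤ k →
    (∀ t, Sum.inr t ∈ g → i < t ∧ t < G.prods.length) →
    expandStr G.prods k g = expandStr G.prods (k+1) g := by
  intro k
  induction k with
  | zero => omega
  | succ k ih =>
    intro i g _ h2 hg
    rw [expandStr_succ, expandStr_succ]
    congr 1
    apply List.map_congr_left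
    intro s hs
    match s with
    | Sum.inl a => rfl
    | Sum.inr t =>
      obtain ⟨ht1, ht2⟩ := hg t hs
      by_cases hk : k = 0
      · omega
      · exact ih t _ (by omega) (by omega) (fun j hj => refs' G hj)

lemma expand_fuel (G : AdmissibleGrammar V) {i : ℕ} {g : List (V ⊕ ℕ)}
    (hg : ∀ t, Sum.inr t ∈ g → i < t ∧ t < G.prods.length) :
    ∀ f f', 1 ≤ f → G.prods.length - i ≤ f → f ≤ f' →
    expandStr G.prods f g = expandStr G.prods f' g := by
  intro f f' h1 h2 hle
  induction f' , hle using Nat.le_induction with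
  | base => rfl
  | succ n hn ih => rw [ih, stab G n i g (by omega) (by omega) hg]

/-- Canonical expansion of nonterminal `i`. -/
def exp (G : AdmissibleGrammar V) (i : ℕ) : List V :=
  expandStr G.prods G.prods.length (G.prods.getD i [])

/-- Expansion of a single token. -/
def expTok (G : AdmissibleGrammar V) : V ⊕ ℕ → List V
  | Sum.inl a => [a]
  | Sum.inr t => exp G t

/-- Expansion of a token string. -/
def expFlat (G : AdmissibleGrammar V) (T : List (V ⊕ ℕ)) : List V :=
  (T.map (expTok G)).flatten

@[simp] lemma expFlat_nil (G : AdmissibleGrammar V) : expFlat G [] = [] := rfl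

@[simp] lemma expFlat_cons (G : AdmissibleGrammar V) (s : V ⊕ ℕ) (T : List (V ⊕ ℕ)) :
    expFlat G (s :: T) = expTok G s ++ expFlat G T := by
  simp [expFlat]

@[simp] lemma expFlat_append (G : AdmissibleGrammar V) (T T' : List (V ⊕ ℕ)) :
    expFlat G (T ++ T') = expFlat G T ++ expFlat G T' := by
  simp [expFlat]

lemma expandStr_eq_expFlat (G : AdmissibleGrammar V) {i : ℕ} {g : List (V ⊕ ℕ)}
    (hg : ∀ t, Sum.inr t ∈ g → i < t ∧ t < G.prods.length) :
    ∀ f, 1 ≤ f → G.prods.length - i ≤ f → expandStr G.prods f g = expFlat G g := by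
  intro f h1 h2
  have h3 : expandStr G.prods f g = expandStr G.prods (G.prods.length + 1) g := by
    rcases Nat.le_total f (G.prods.length + 1) with h | h
    · exact expand_fuel G hg f _ h1 h2 h
    · exact (expand_fuel G hg _ f (by have := len_pos G; omega) (by omega) h).symm
  rw [h3, expandStr_succ]
  rfl

lemma exp_unfold (G : AdmissibleGrammar V) {i : ℕ} (hi : i < G.prods.length) :
    exp G i = expFlat G (gP G i) :=
  expandStr_eq_expFlat G (fun _ hj => refs' G hj) _ (len_pos G) (by omega)

lemma exp_ne : ∀ (m : ℕ) (G : AdmissibleGrammar V) (i : ℕ),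
    G.prods.length - i ≤ m → i < G.prods.length → exp G i ≠ [] := by
  intro m
  induction m with
  | zero => intro G i h1 h2; omega
  | succ m ih =>
    intro G i h1 h2
    rw [exp_unfold G h2]
    rcases List.exists_cons_of_ne_nil (gP_ne G h2) with ⟨s, ts, hs⟩
    rw [hs, expFlat_cons]
    have hmem : s ∈ gP G i := by rw [hs]; exact List.mem_cons_self
    apply List.append_ne_nil_of_left_ne_nil
    match s with
    | Sum.inl a => simp [expTok]
    | Sum.inr t =>
      obtain ⟨ht1, ht2⟩ := refs' G hmem
      exact ih G t (by omega) ht2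

lemma exp_ne_nil (G : AdmissibleGrammar V) {i : ℕ} (hi : i < G.prods.length) :
    exp G i ≠ [] := exp_ne _ G i le_rfl hi

lemma expTok_len_pos (G : AdmissibleGrammar V) {s : V ⊕ ℕ}
    (hs : ∀ t, s = Sum.inr t → t < G.prods.length) : 0 < (expTok G s).length := by
  match s with
  | Sum.inl a => simp [expTok]
  | Sum.inr t =>
    simp only [expTok]
    exact List.length_pos_iff.2 (exp_ne_nil G (hs t rfl))

lemma length_le_expFlat (G : AdmissibleGrammar V) :
    ∀ (T : List (V ⊕ ℕ)), (∀ t, Sum.inr t ∈ T → t < G.prods.length) →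
    T.length ≤ (expFlat G T).length := by
  intro T
  induction T with
  | nil => simp
  | cons s ts ih =>
    intro hT
    rw [expFlat_cons, List.length_cons, List.length_append]
    have h1 : 0 < (expTok G s).length :=
      expTok_len_pos G (fun t ht => hT t (ht ▸ List.mem_cons_self))
    have h2 := ih (fun t ht => hT t (List.mem_cons_of_mem _ ht))
    omega

end GramAux

namespace GramAux

open List

variable {V : Type*}

/-- Reachable nonterminals. -/
inductive Reach (G : AdmissibleGrammar V) : ℕ → Prop
  | zero : Reach G 0
  | step {i j : ℕ} : Reach G i → Sum.inr j ∈ gP G i → Reach G j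

lemma reach_lt (G : AdmissibleGrammar V) {i : ℕ} (h : Reach G i) : i < G.prods.length := by
  induction h with
  | zero => exact len_pos G
  | step _ hj _ => exact (refs' G hj).2

lemma gP_eq_nil (G : AdmissibleGrammar V) {i : ℕ} (hi : G.prods.length ≤ i) :
    gP G i = [] := by
  simp only [gP]; exact List.getD_eq_default _ _ hi

/-- Fueled path count from `i` to `j`. -/
def dcnt (prods : List (List (V ⊕ ℕ))) (j : ℕ) : ℕ → ℕ → ℕ
  | 0, _ => 0
  | f + 1, i =>
      if i = j then 1 else
      ((prods.getD i []).map fun s =>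
        match s with
        | Sum.inl _ => 0
        | Sum.inr t => dcnt prods j f t).sum

lemma dcnt_succ (prods : List (List (V ⊕ ℕ))) (j f i : ℕ) :
    dcnt prods j (f+1) i = if i = j then 1 else
      ((prods.getD i []).map fun s =>
        match s with
        | Sum.inl _ => 0
        | Sum.inr t => dcnt prods j f t).sum := rfl

lemma dstab (G : AdmissibleGrammar V) (j : ℕ) : ∀ k (i : ℕ), 1 ≤ k →
    G.prods.length - i ≤ k → dcnt G.prods j k i = dcnt G.prods j (k+1) i := by
  intro k
  induction k with
  | zero => omega
  | succ k ih =>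
    intro i _ h2
    rw [dcnt_succ, dcnt_succ]
    by_cases hij : i = j
    · simp [hij]
    · simp only [hij, if_false]
      congr 1
      apply List.map_congr_left
      intro s hs
      match s with
      | Sum.inl a => rfl
      | Sum.inr t =>
        by_cases hi : i < G.prods.length
        · obtain ⟨ht1, ht2⟩ := refs' G (hs : Sum.inr t ∈ gP G i)
          by_cases hk : k = 0
          · omega
          · exact ih t (by omega) (by omega)
        · exfalso
          rw [List.getD_eq_default _ _ (by omega)] at hs
          simp at hs

/-- Canonical path count. -/
def D (G : AdmissibleGrammar V) (j i : ℕ) : ℕ := dcnt G.prods j G.prods.length i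

lemma d_unfold (G : AdmissibleGrammar V) (j i : ℕ) :
    D G j i = if i = j then 1 else
      ((gP G i).map fun s =>
        match s with
        | Sum.inl _ => 0
        | Sum.inr t => D G j t).sum := by
  have h := dstab G j G.prods.length i (len_pos G) (by omega)
  rw [D, h, dcnt_succ]
  rfl

@[simp] lemma d_self (G : AdmissibleGrammar V) (j : ℕ) : D G j j = 1 := by
  rw [d_unfold]; simp

lemma d_of_ge (G : AdmissibleGrammar V) {j i : ℕ} (hi : G.prods.length ≤ i)
    (hij : i ≠ j) : D G j i = 0 := by
  rw [d_unfold, if_neg hij, gP, List.getD_eq_default _ _ (by omega)]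
  simp

lemma d_eq_zero (G : AdmissibleGrammar V) :
    ∀ k (i j : ℕ), G.prods.length - i ≤ k → j < i → D G j i = 0 := by
  intro k
  induction k with
  | zero => intro i j h1 h2; exact d_of_ge G (by omega) (by omega)
  | succ k ih =>
    intro i j h1 h2
    rw [d_unfold, if_neg (by omega)]
    apply List.sum_eq_zero
    intro x hx
    rcases List.mem_map.1 hx with ⟨s, hs, rfl⟩
    match s with
    | Sum.inl a => rfl
    | Sum.inr t =>
      obtain ⟨ht1, ht2⟩ := refs' G (hs : Sum.inr t ∈ gP G i)
      exact ih t j (by omega) (by omega)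

lemma d_ge_one_of_mem (G : AdmissibleGrammar V) {i j : ℕ}
    (hj : Sum.inr j ∈ gP G i) (hij : i ≠ j) : 1 ≤ D G j i := by
  rw [d_unfold, if_neg hij]
  have hmem : (1 : ℕ) ∈ (gP G i).map fun s =>
      match s with
      | Sum.inl _ => 0
      | Sum.inr t => D G j t := by
    apply List.mem_map.2
    exact ⟨Sum.inr j, hj, by simp⟩
  exact List.single_le_sum (fun x _ => Nat.zero_le x) 1 hmem

lemma list_sum_mul_right (c : ℕ) : ∀ (l : List ℕ), (l.map fun x => x * c).sum = l.sum * c := by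
  intro l
  induction l with
  | nil => simp
  | cons x l ih => simp [ih, Nat.add_mul]

lemma d_comp (G : AdmissibleGrammar V) :
    ∀ k (i a m : ℕ), G.prods.length - i ≤ k → D G a i * D G m a ≤ D G m i := by
  intro k
  induction k with
  | zero =>
    intro i a m h1
    by_cases hia : i = a
    · subst hia; simp
    · rw [d_of_ge G (by omega) hia]; simp
  | succ k ih =>
    intro i a m h1
    by_cases hia : i = a
    · subst hia; simp
    · by_cases him : i = m
      · subst him
        rcases Nat.lt_trichotomy a i with h | h | h
        · rw [d_eq_zero G (G.prods.length) i a (by omega) h]; simp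
        · omega
        · rw [d_eq_zero G (G.prods.length) a i (by omega) h]; simp
      · rw [d_unfold G a i, if_neg hia, d_unfold G m i, if_neg him]
        rw [← list_sum_mul_right (D G m a), List.map_map]
        apply List.sum_le_sum
        intro s hs
        match s with
        | Sum.inl v => simp
        | Sum.inr t =>
          show D G a t * D G m a ≤ D G m t
          by_cases hi : i < G.prods.length
          · obtain ⟨ht1, ht2⟩ := refs' G (hs : Sum.inr t ∈ gP G i)
            exact ih t a m (by omega)
          · exfalso
            rw [gP_eq_nil G (by omega)] at hs
            simp at hs

end GramAux

namespace GramAux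

open List

variable {V : Type*}

/-- Number of occurrences of nonterminal `j` in production `i`. -/
def cnt (G : AdmissibleGrammar V) (i j : ℕ) : ℕ :=
  ((gP G i).map fun s =>
    match s with
    | Sum.inl _ => 0
    | Sum.inr t => if t = j then 1 else 0).sum

lemma mem_of_cnt_pos {G : AdmissibleGrammar V} {i j : ℕ} (h : 1 ≤ cnt G i j) :
    Sum.inr j ∈ gP G i := by
  by_contra hm
  have h0 : cnt G i j = 0 := by
    apply List.sum_eq_zero
    intro x hx
    rcases List.mem_map.1 hx with ⟨s, hs, rfl⟩
    match s with
    | Sum.inl a => rfl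
    | Sum.inr t =>
      by_cases ht : t = j
      · exact absurd (ht ▸ hs) hm
      · simp [ht]
  omega

lemma min1_sum : ∀ (l : List ℕ), min 1 l.sum ≤ (l.map fun x => min 1 x).sum := by
  intro l
  by_cases h : l.sum = 0
  · simp [h]
  · have h2 : ∃ x ∈ l, x ≠ 0 := by
      by_contra hc
      push_neg at hc
      exact h (List.sum_eq_zero hc)
    obtain ⟨x, hx, hx0⟩ := h2
    have hmem : min 1 x ∈ l.map fun x => min 1 x := List.mem_map.2 ⟨x, hx, rfl⟩
    have := List.single_le_sum (fun y (_ : y ∈ l.map fun x => min 1 x) => Nat.zero_le y) _ hmem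
    omega

lemma list_sum_finset_sum {α β : Type*} (l : List α) (F : Finset β) (g : α → β → ℕ) :
    (l.map fun s => ∑ m ∈ F, g s m).sum = ∑ m ∈ F, (l.map fun s => g s m).sum := by
  induction l with
  | nil => simp
  | cons s l ih => simp [ih, Finset.sum_add_distrib]

lemma list_sum_map_add {α : Type*} (l : List α) (f g : α → ℕ) :
    (l.map fun s => f s + g s).sum = (l.map f).sum + (l.map g).sum := by
  induction l with
  | nil => simp
  | cons s l ih => simp [ih]; omega

lemma claimC_base1 (G : AdmissibleGrammar V) (j : ℕ) :
    (if j = j then 1 else 0) +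
      ∑ m ∈ Finset.range G.prods.length, min 1 (D G m j) * cnt G m j ≤ D G j j := by
  rw [if_pos rfl, d_self]
  have hz : ∑ m ∈ Finset.range G.prods.length, min 1 (D G m j) * cnt G m j = 0 := by
    apply Finset.sum_eq_zero
    intro m _
    by_cases hc : cnt G m j = 0
    · simp [hc]
    · have hmem := mem_of_cnt_pos (G := G) (i := m) (j := j) (by omega)
      have hmj : m < j := (refs' G hmem).1
      rw [d_eq_zero G G.prods.length j m (by omega) hmj]
      simp
  omega

lemma claimC_base2 (G : AdmissibleGrammar V) {i j : ℕ} (hij : i ≠ j)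
    (hi : G.prods.length ≤ i) :
    (if i = j then 1 else 0) +
      ∑ m ∈ Finset.range G.prods.length, min 1 (D G m i) * cnt G m j ≤ D G j i := by
  rw [if_neg hij, d_of_ge G hi hij]
  have hz : ∑ m ∈ Finset.range G.prods.length, min 1 (D G m i) * cnt G m j = 0 := by
    apply Finset.sum_eq_zero
    intro m hm
    rw [d_of_ge G hi (by simp at hm; omega)]
    simp
  omega

lemma claimC (G : AdmissibleGrammar V) :
    ∀ k (i j : ℕ), G.prods.length - i ≤ k →
    (if i = j then 1 else 0) +
      ∑ m ∈ Finset.range G.prods.length, min 1 (D G m i) * cnt G m j ≤ D G j i := by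
  intro k
  induction k with
  | zero =>
    intro i j h1
    by_cases hij : i = j
    · subst hij; exact claimC_base1 G i
    · exact claimC_base2 G hij (by omega)
  | succ k ih =>
    intro i j h1
    by_cases hij : i = j
    · subst hij; exact claimC_base1 G i
    · by_cases hi : i < G.prods.length
      swap
      · exact claimC_base2 G hij (by omega)
      rw [if_neg hij, Nat.zero_add, d_unfold G j i, if_neg hij]
      set l := gP G i with hl
      set L := G.prods.length with hL
      have step1 : (l.map fun s =>
          (match s with
           | Sum.inl _ => 0
           | Sum.inr t => if t = j then 1 else 0) +
          (match s with
           | Sum.inl _ => (0 : ℕ)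
           | Sum.inr t => ∑ m ∈ Finset.range L, min 1 (D G m t) * cnt G m j)).sum ≤
          (l.map fun s =>
          match s with
          | Sum.inl _ => 0
          | Sum.inr t => D G j t).sum := by
        apply List.sum_le_sum
        intro s hs
        match s with
        | Sum.inl a => simp
        | Sum.inr t =>
          obtain ⟨ht1, ht2⟩ := refs' G (hs : Sum.inr t ∈ gP G i)
          have := ih t j (by omega)
          simpa using this
      refine le_trans ?_ step1
      rw [list_sum_map_add]
      have hcnt : (l.map fun s =>
          (match s with
           | Sum.inl _ => 0
           | Sum.inr t => if t = j then 1 else 0)).sum = cnt G i j := rfl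
      rw [hcnt]
      have hswap : (l.map fun s =>
          (match s with
           | Sum.inl _ => (0 : ℕ)
           | Sum.inr t => ∑ m ∈ Finset.range L, min 1 (D G m t) * cnt G m j)).sum =
          ∑ m ∈ Finset.range L, (l.map fun s =>
            (match s with
             | Sum.inl _ => (0 : ℕ)
             | Sum.inr t => min 1 (D G m t))).sum * cnt G m j := by
        have e1 : (l.map fun s =>
            (match s with
             | Sum.inl _ => (0 : ℕ)
             | Sum.inr t => ∑ m ∈ Finset.range L, min 1 (D G m t) * cnt G m j)) =
            (l.map fun s => ∑ m ∈ Finset.range L,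
              (match s with
               | Sum.inl _ => (0 : ℕ)
               | Sum.inr t => min 1 (D G m t)) * cnt G m j) := by
          apply List.map_congr_left
          intro s _
          match s with
          | Sum.inl a => simp
          | Sum.inr t => rfl
        rw [e1, list_sum_finset_sum]
        apply Finset.sum_congr rfl
        intro m _
        rw [← list_sum_mul_right, List.map_map]
        rfl
      rw [hswap]
      have hiL : i ∈ Finset.range L := Finset.mem_range.2 hi
      rw [← Finset.add_sum_erase _ (fun m => min 1 (D G m i) * cnt G m j) hiL]
      have hterm : min 1 (D G i i) * cnt G i j = cnt G i j := by simp
      rw [hterm]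
      apply Nat.add_le_add_left
      refine le_trans (Finset.sum_le_sum ?_)
        (Finset.sum_le_sum_of_subset (Finset.erase_subset _ _))
      intro m hm
      have hmi : m ≠ i := Finset.ne_of_mem_erase hm
      apply Nat.mul_le_mul _ le_rfl
      rw [d_unfold G m i, if_neg (Ne.symm hmi)]
      refine le_trans (min1_sum _) ?_
      rw [List.map_map]
      apply le_of_eq
      congr 1
      apply List.map_congr_left
      intro s _
      match s with
      | Sum.inl a => simp
      | Sum.inr t => rfl

end GramAux

namespace GramAux

open List

variable {V : Type*}

open Classical in
/-- Number of occurrences of nonterminal `j` within reachable productions. -/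
noncomputable def rc (G : AdmissibleGrammar V) (j : ℕ) : ℕ :=
  ∑ m ∈ Finset.range G.prods.length, if Reach G m then cnt G m j else 0

lemma reach_d (G : AdmissibleGrammar V) {m : ℕ} (h : Reach G m) : 1 ≤ D G m 0 := by
  induction h with
  | zero => simp
  | @step i j hR hj ihd =>
    have hij := (refs' G hj).1
    have h1 : 1 ≤ D G j i := d_ge_one_of_mem G hj (by omega)
    have h2 := d_comp G G.prods.length 0 i j (by omega)
    calc 1 ≤ D G i 0 * D G j i := Nat.one_le_iff_ne_zero.2 (by positivity)
    _ ≤ D G j 0 := h2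

lemma d0_ge_two (G : AdmissibleGrammar V) {j : ℕ} (hj1 : 1 ≤ j) (hrc : 2 ≤ rc G j) :
    2 ≤ D G j 0 := by
  classical
  have hC := claimC G G.prods.length 0 j (by omega)
  rw [if_neg (by omega), Nat.zero_add] at hC
  calc 2 ≤ rc G j := hrc
  _ ≤ ∑ m ∈ Finset.range G.prods.length, min 1 (D G m 0) * cnt G m j := by
      rw [rc]
      apply Finset.sum_le_sum
      intro m _
      by_cases hR : Reach G m
      · rw [if_pos hR]
        have h1 := reach_d G hR
        have h2 : min 1 (D G m 0) = 1 := by omega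
        rw [h2, Nat.one_mul]
      · rw [if_neg hR]
        exact Nat.zero_le _
  _ ≤ D G j 0 := hC

end GramAux

namespace GramAux

open List

variable {V : Type*}

open Classical in
/-- Positions where `x` occurs fully inside `y`. -/
noncomputable def occF (x y : List V) : Finset ℕ :=
  (Finset.range y.length).filter fun q => x <+: y.drop q ∧ q + x.length ≤ y.length

lemma mem_occF {x y : List V} {q : ℕ} :
    q ∈ occF x y ↔ q < y.length ∧ x <+: y.drop q ∧ q + x.length ≤ y.length := by
  simp [occF]

lemma occ_card_append (x b c : List V) (hx : x ≠ []) :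
    (occF x b).card + (occF x c).card ≤ (occF x (b ++ c)).card := by
  classical
  have hxl : 1 ≤ x.length := List.length_pos_iff.2 hx
  have hsub : occF x b ∪ (occF x c).image (fun q => b.length + q) ⊆ occF x (b ++ c) := by
    intro q hq
    rcases Finset.mem_union.1 hq with hq | hq
    · rw [mem_occF] at hq ⊢
      obtain ⟨h1, h2, h3⟩ := hq
      refine ⟨by simp; omega, ?_, by simp; omega⟩
      rw [List.drop_append]
      exact h2.trans (List.prefix_append _ _)
    · rcases Finset.mem_image.1 hq with ⟨q', hq', rfl⟩
      rw [mem_occF] at hq' ⊢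
      obtain ⟨h1, h2, h3⟩ := hq'
      refine ⟨by simp; omega, ?_, by simp; omega⟩
      rw [List.drop_append]
      have hb : b.drop (b.length + q') = [] := by
        apply List.drop_eq_nil_of_le; omega
      rw [hb]
      have : b.length + q' - b.length = q' := by omega
      rw [this, List.nil_append]
      exact h2
  have hdisj : Disjoint (occF x b) ((occF x c).image (fun q => b.length + q)) := by
    rw [Finset.disjoint_left]
    intro q hq hq2
    rw [mem_occF] at hq
    rcases Finset.mem_image.1 hq2 with ⟨q', hq', heq⟩
    omega
  calc (occF x b).card + (occF x c).card
      = (occF x b ∪ (occF x c).image (fun q => b.length + q)).card := by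
        rw [Finset.card_union_of_disjoint hdisj,
          Finset.card_image_of_injective _ (add_right_injective _)]
    _ ≤ (occF x (b ++ c)).card := Finset.card_le_card hsub

lemma occ_self_mem {x : List V} (hx : x ≠ []) : 0 ∈ occF x x := by
  rw [mem_occF]
  exact ⟨List.length_pos_iff.2 hx, by simp, by omega⟩

lemma d_le_card (G : AdmissibleGrammar V) :
    ∀ k (i j : ℕ), G.prods.length - i ≤ k → j < G.prods.length →
    D G j i ≤ (occF (exp G j) (exp G i)).card := by
  intro k
  induction k with
  | zero =>
    intro i j h1 hj
    have hij : i ≠ j := by omega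
    rw [d_of_ge G (by omega) hij]
    exact Nat.zero_le _
  | succ k ih =>
    intro i j h1 hj
    by_cases hij : i = j
    · subst hij
      rw [d_self]
      rw [Nat.succ_le_iff, Finset.card_pos]
      exact ⟨0, occ_self_mem (exp_ne_nil G hj)⟩
    · by_cases hi : i < G.prods.length
      swap
      · rw [d_of_ge G (by omega) hij]; exact Nat.zero_le _
      have hx : exp G j ≠ [] := exp_ne_nil G hj
      have gen : ∀ ts : List (V ⊕ ℕ),
          (∀ t, Sum.inr t ∈ ts → i < t ∧ t < G.prods.length) →
          ((ts.map fun s => match s with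
            | Sum.inl _ => 0
            | Sum.inr t => D G j t).sum ≤ (occF (exp G j) (expFlat G ts)).card) := by
        intro ts
        induction ts with
        | nil => simp
        | cons s rest ihts =>
          intro hts
          rw [expFlat_cons, List.map_cons, List.sum_cons]
          refine le_trans (Nat.add_le_add ?_
            (ihts fun t ht => hts t (List.mem_cons_of_mem _ ht)))
            (occ_card_append _ _ _ hx)
          match s with
          | Sum.inl a => exact Nat.zero_le _
          | Sum.inr t =>
            obtain ⟨ht1, ht2⟩ := hts t (List.mem_cons_self)
            exact ih t j (by omega) hj
      rw [d_unfold, if_neg hij, exp_unfold G hi]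
      exact gen (gP G i) (fun t ht => refs' G ht)

lemma two_pos (G : AdmissibleGrammar V) {j : ℕ} (hj1 : 1 ≤ j)
    (hjL : j < G.prods.length) (hrc : 2 ≤ rc G j) :
    ∃ q1 q2 : ℕ, q1 ≠ q2 ∧ exp G j <+: (exp G 0).drop q1 ∧
      exp G j <+: (exp G 0).drop q2 := by
  have h2 : 2 ≤ (occF (exp G j) (exp G 0)).card :=
    le_trans (d0_ge_two G hj1 hrc) (d_le_card G G.prods.length 0 j (by omega) hjL)
  obtain ⟨a, ha, b, hb, hab⟩ :=
    Finset.one_lt_card.1 (show 1 < (occF (exp G j) (exp G 0)).card by omega)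
  rw [mem_occF] at ha hb
  exact ⟨a, b, hab, ha.2.1, hb.2.1⟩

end GramAux

namespace GramAux

open List

variable {V : Type*}

lemma cnt_pos_of_mem {G : AdmissibleGrammar V} {i j : ℕ} (h : Sum.inr j ∈ gP G i) :
    1 ≤ cnt G i j := by
  have hmem : (1 : ℕ) ∈ (gP G i).map fun s =>
      match s with
      | Sum.inl _ => 0
      | Sum.inr t => if t = j then 1 else 0 :=
    List.mem_map.2 ⟨Sum.inr j, h, by simp⟩
  exact List.single_le_sum (fun x _ => Nat.zero_le x) 1 hmem

lemma expFlat_flatten (G : AdmissibleGrammar V) :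
    ∀ ll : List (List (V ⊕ ℕ)), expFlat G ll.flatten = (ll.map (expFlat G)).flatten := by
  intro ll
  induction ll with
  | nil => simp
  | cons l ll ih => simp [ih]

lemma list_sum_eq_range {α : Type*} (d : α) (h : α → ℕ) :
    ∀ l : List α, (l.map h).sum = ∑ i ∈ Finset.range l.length, h (l.getD i d) := by
  intro l
  induction l with
  | nil => simp
  | cons x l ih =>
    rw [List.map_cons, List.sum_cons, List.length_cons, Finset.sum_range_succ']
    simp only [List.getD_cons_succ, List.getD_cons_zero]
    rw [ih]
    omega

/-- The grammar length as a sum over indices. -/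
lemma glen_eq (G : AdmissibleGrammar V) :
    (G.prods.map List.length).sum =
      ∑ i ∈ Finset.range G.prods.length, (gP G i).length := by
  exact list_sum_eq_range [] List.length G.prods

section Inline

variable (G : AdmissibleGrammar V) (a t : ℕ) (aV : V)

/-- Substitution of the single occurrence of `t`. -/
def substTok : V ⊕ ℕ → List (V ⊕ ℕ) := fun s =>
  match s with
  | Sum.inr j => if j = t then gP G t else [Sum.inr j]
  | Sum.inl v => [Sum.inl v]

def newProds : List (List (V ⊕ ℕ)) :=
  (List.range G.prods.length).map fun i =>
    if i = t then [Sum.inl aV]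
    else if i = a then ((gP G a).map (substTok G t)).flatten
    else gP G i

lemma newProds_length : (newProds G a t aV).length = G.prods.length := by
  simp [newProds]

lemma newProds_get {i : ℕ} (hi : i < G.prods.length) :
    (newProds G a t aV).getD i [] =
      (if i = t then [Sum.inl aV]
       else if i = a then ((gP G a).map (substTok G t)).flatten
       else gP G i) := by
  rw [List.getD_eq_getElem _ _ (by rw [newProds_length]; exact hi)]
  simp [newProds]

lemma substTok_ne_nil (G : AdmissibleGrammar V) (a t : ℕ)
    (ht : t < G.prods.length) (s : V ⊕ ℕ) : substTok G t s ≠ [] := by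
  match s with
  | Sum.inl v => simp [substTok]
  | Sum.inr j =>
    simp only [substTok]
    by_cases hj : j = t
    · simpa [hj] using gP_ne G ht
    · simp [hj]

/-- The inlined grammar. -/
def inlineG (ht : t < G.prods.length) (ha : a < t) : AdmissibleGrammar V where
  prods := newProds G a t aV
  prods_ne := by
    have := len_pos G
    intro h
    rw [← List.length_eq_zero_iff] at h
    rw [newProds_length] at h
    omega
  prod_ne := by
    intro g hg
    rw [newProds] at hg
    rcases List.mem_map.1 hg with ⟨i, hi, rfl⟩
    have hiL : i < G.prods.length := by
      rcases List.mem_range.1 hi with h; exact h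
    by_cases hit : i = t
    · simp [hit]
    · by_cases hia : i = a
      · subst hia
        simp only [hit, if_false, if_pos rfl]
        rcases List.exists_cons_of_ne_nil (gP_ne G hiL) with ⟨s, ts, hs⟩
        rw [hs, List.map_cons, List.flatten_cons]
        exact List.append_ne_nil_of_left_ne_nil (substTok_ne_nil G i t ht s) _
      · simp only [hit, if_false, hia, if_false]
        exact gP_ne G hiL
  refs := by
    intro i hiL j hj
    rw [newProds_length] at hiL
    rw [newProds_get G a t aV hiL] at hj
    rw [newProds_length]
    by_cases hit : i = t
    · rw [if_pos hit] at hj; simp at hj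
    · rw [if_neg hit] at hj
      by_cases hia : i = a
      · rw [if_pos hia] at hj
        rcases List.mem_flatten.1 hj with ⟨piece, hp, hjp⟩
        rcases List.mem_map.1 hp with ⟨s, hs, rfl⟩
        match s with
        | Sum.inl v => simp [substTok] at hjp
        | Sum.inr j' =>
          simp only [substTok] at hjp
          by_cases hj' : j' = t
          · rw [if_pos hj'] at hjp
            have := refs' G hjp
            subst hia
            omega
          · rw [if_neg hj'] at hjp
            simp at hjp
            subst hjp
            have := refs' G (hia ▸ hs)
            omega
      · rw [if_neg hia] at hj
        exact refs' G hj

end Inline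

end GramAux

namespace GramAux

open List

variable {V : Type*}

section Inline2

variable (G : AdmissibleGrammar V) (a t : ℕ) (aV : V)
variable (ht : t < G.prods.length) (ha : a < t)

lemma inline_length :
    (inlineG G a t aV ht ha).prods.length = G.prods.length := by
  show (newProds G a t aV).length = _
  exact newProds_length G a t aV

lemma gP_inline {i : ℕ} (hi : i < G.prods.length) :
    gP (inlineG G a t aV ht ha) i =
      (if i = t then [Sum.inl aV]
       else if i = a then ((gP G a).map (substTok G t)).flatten
       else gP G i) := by
  show (newProds G a t aV).getD i [] = _
  exact newProds_get G a t aV hi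

lemma gP_inline_other {i : ℕ} (hit : i ≠ t) (hia : i ≠ a) :
    gP (inlineG G a t aV ht ha) i = gP G i := by
  by_cases hi : i < G.prods.length
  · rw [gP_inline G a t aV ht ha hi, if_neg hit, if_neg hia]
  · rw [gP_eq_nil G (by omega), gP_eq_nil _ (by rw [inline_length]; omega)]

lemma no_inr_t_in_inline_a (hat : Sum.inr t ∈ gP G a) :
    Sum.inr t ∉ gP (inlineG G a t aV ht ha) a := by
  rw [gP_inline G a t aV ht ha (by omega), if_neg (by omega), if_pos rfl]
  intro hmem
  rcases List.mem_flatten.1 hmem with ⟨piece, hp, hjp⟩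
  rcases List.mem_map.1 hp with ⟨s, hs, rfl⟩
  match s with
  | Sum.inl v => simp [substTok] at hjp
  | Sum.inr j' =>
    simp only [substTok] at hjp
    by_cases hj' : j' = t
    · rw [if_pos hj'] at hjp
      have := refs' G hjp
      omega
    · rw [if_neg hj'] at hjp
      simp at hjp
      omega

lemma reach_inline_to_orig (hRa : Reach G a) (hat : Sum.inr t ∈ gP G a) :
    ∀ m, Reach (inlineG G a t aV ht ha) m → m ≠ t → Reach G m := by
  intro m h
  induction h with
  | zero => intro _; exact Reach.zero
  | @step i j hRi hj ih =>
    intro hjt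
    by_cases hil : i < G.prods.length
    swap
    · exfalso
      rw [gP_eq_nil _ (by rw [inline_length]; omega)] at hj
      simp at hj
    rw [gP_inline G a t aV ht ha hil] at hj
    by_cases hit : i = t
    · rw [if_pos hit] at hj; simp at hj
    · rw [if_neg hit] at hj
      by_cases hia : i = a
      · subst hia
        rw [if_pos rfl] at hj
        rcases List.mem_flatten.1 hj with ⟨piece, hp, hjp⟩
        rcases List.mem_map.1 hp with ⟨s, hs, rfl⟩
        match s with
        | Sum.inl v => simp [substTok] at hjp
        | Sum.inr j' =>
          simp only [substTok] at hjp
          by_cases hj' : j' = t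
          · rw [if_pos hj'] at hjp
            exact Reach.step (Reach.step hRa hat) hjp
          · rw [if_neg hj'] at hjp
            simp at hjp
            subst hjp
            exact Reach.step hRa hs
      · rw [if_neg hia] at hj
        exact Reach.step (ih hit) hj

lemma not_reach_inline_t (hRa : Reach G a) (hat : Sum.inr t ∈ gP G a)
    (huniq : ∀ i, i ≠ a → Reach G i → Sum.inr t ∉ gP G i) :
    ¬ Reach (inlineG G a t aV ht ha) t := by
  intro h
  cases h with
  | zero => omega
  | @step i j hRi htok =>
    by_cases hil : i < G.prods.length
    swap
    · rw [gP_eq_nil _ (by rw [inline_length]; omega)] at htok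
      simp at htok
    by_cases hit : i = t
    · rw [hit, gP_inline G a t aV ht ha ht, if_pos rfl] at htok
      simp at htok
    · by_cases hia : i = a
      · rw [hia] at htok
        exact no_inr_t_in_inline_a G a t aV ht ha hat htok
      · rw [gP_inline_other G a t aV ht ha hit hia] at htok
        exact huniq i hia (reach_inline_to_orig G a t aV ht ha hRa hat i hRi hit) htok

lemma reach_orig_to_inline (hRa : Reach G a) (hat : Sum.inr t ∈ gP G a)
    (huniq : ∀ i, i ≠ a → Reach G i → Sum.inr t ∉ gP G i) :
    ∀ m, Reach G m →
      (m ≠ t → Reach (inlineG G a t aV ht ha) m) ∧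
      (m = t → Reach (inlineG G a t aV ht ha) a) := by
  intro m h
  induction h with
  | zero =>
    constructor
    · intro _; exact Reach.zero
    · intro h0; omega
  | @step i j hRi hj ih =>
    have hil : i < G.prods.length := reach_lt G hRi
    constructor
    · intro hjt
      by_cases hit : i = t
      · have hra' : Reach (inlineG G a t aV ht ha) a := ih.2 hit
        refine Reach.step hra' ?_
        rw [gP_inline G a t aV ht ha (by omega), if_neg (by omega), if_pos rfl]
        apply List.mem_flatten.2
        refine ⟨gP G t, ?_, by rw [← hit]; exact hj⟩
        apply List.mem_map.2
        refine ⟨Sum.inr t, hat, ?_⟩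
        simp [substTok]
      · have hri' : Reach (inlineG G a t aV ht ha) i := ih.1 hit
        by_cases hia : i = a
        · refine Reach.step hri' ?_
          rw [hia, gP_inline G a t aV ht ha (by omega), if_neg (by omega), if_pos rfl]
          apply List.mem_flatten.2
          refine ⟨[Sum.inr j], ?_, by simp⟩
          apply List.mem_map.2
          refine ⟨Sum.inr j, by rw [← hia]; exact hj, ?_⟩
          simp [substTok, hjt]
        · refine Reach.step hri' ?_
          rw [gP_inline_other G a t aV ht ha hit hia]
          exact hj
    · rintro rfl
      by_cases hia : i = a
      · exact hia ▸ ih.1 (by omega)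
      · exact absurd hj (huniq i hia hRi)

end Inline2

end GramAux

namespace GramAux

open List

variable {V : Type*}

section Inline3

variable (G : AdmissibleGrammar V) (a t : ℕ) (aV : V)
variable (ht : t < G.prods.length) (ha : a < t)

lemma exp_inline (hRa : Reach G a) (hat : Sum.inr t ∈ gP G a)
    (huniq : ∀ i, i ≠ a → Reach G i → Sum.inr t ∉ gP G i) :
    ∀ k i, G.prods.length - i ≤ k → Reach G i → i ≠ t →
      exp (inlineG G a t aV ht ha) i = exp G i := by
  intro k
  induction k with
  | zero =>
    intro i h1 hRi _
    have := reach_lt G hRi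
    omega
  | succ k ih =>
    intro i h1 hRi hit
    have hil : i < G.prods.length := reach_lt G hRi
    have hil' : i < (inlineG G a t aV ht ha).prods.length := by
      rw [inline_length]; exact hil
    rw [exp_unfold _ hil', exp_unfold G hil]
    by_cases hia : i = a
    · rw [gP_inline G a t aV ht ha hil, if_neg hit, if_pos hia]
      show expFlat _ ((gP G a).map (substTok G t)).flatten = expFlat G (gP G i)
      rw [expFlat_flatten, List.map_map]
      rw [hia]
      show (List.map (expFlat (inlineG G a t aV ht ha) ∘ substTok G t) (gP G a)).flatten
        = (List.map (expTok G) (gP G a)).flatten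
      congr 1
      apply List.map_congr_left
      intro s hs
      match s with
      | Sum.inl v => simp [Function.comp, substTok, expFlat, expTok]
      | Sum.inr j =>
        show expFlat (inlineG G a t aV ht ha) (substTok G t (Sum.inr j)) = expTok G (Sum.inr j)
        by_cases hjt : j = t
        · simp only [substTok, if_pos hjt]
          have hexp : expFlat (inlineG G a t aV ht ha) (gP G t) = expFlat G (gP G t) := by
            show (List.map (expTok _) (gP G t)).flatten = (List.map (expTok G) (gP G t)).flatten
            congr 1
            apply List.map_congr_left
            intro s' hs'
            match s' with
            | Sum.inl v => rfl
            | Sum.inr j' =>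
              obtain ⟨hj1, hj2⟩ := refs' G hs'
              show exp (inlineG G a t aV ht ha) j' = exp G j'
              have hRt : Reach G t := Reach.step hRa hat
              exact ih j' (by omega) (Reach.step hRt hs') (by omega)
          rw [hexp, hjt]
          show expFlat G (gP G t) = exp G t
          exact (exp_unfold G ht).symm
        · simp only [substTok, if_neg hjt]
          obtain ⟨hj1, hj2⟩ := refs' G (hia ▸ hs)
          show expTok (inlineG G a t aV ht ha) (Sum.inr j) ++ [] = expTok G (Sum.inr j)
          rw [List.append_nil]
          show exp (inlineG G a t aV ht ha) j = exp G j
          exact ih j (by omega) (Reach.step hRa hs) hjt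
    · rw [gP_inline G a t aV ht ha hil, if_neg hit, if_neg hia]
      show (List.map (expTok _) (gP G i)).flatten = (List.map (expTok G) (gP G i)).flatten
      congr 1
      apply List.map_congr_left
      intro s hs
      match s with
      | Sum.inl v => rfl
      | Sum.inr j =>
        obtain ⟨hj1, hj2⟩ := refs' G hs
        show exp (inlineG G a t aV ht ha) j = exp G j
        have hjt : j ≠ t := by
          intro hjt
          exact huniq i hia hRi (hjt ▸ hs)
        exact ih j (by omega) (Reach.step hRi hs) hjt

end Inline3

end GramAux

namespace GramAux

open List

variable {V : Type*}

lemma cnt_congr {G G' : AdmissibleGrammar V} {m j : ℕ} (h : gP G' m = gP G m) :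
    cnt G' m j = cnt G m j := by
  rw [cnt, cnt, h]

lemma list_sum_map_one {α : Type*} (l : List α) : (l.map fun _ => 1).sum = l.length := by
  induction l with
  | nil => simp
  | cons x l ih => simp [ih]; omega

section Inline4

variable (G : AdmissibleGrammar V) (a t : ℕ) (aV : V)

lemma substTok_len (ht : t < G.prods.length) (s : V ⊕ ℕ) :
    (substTok G t s).length =
      (match s with
       | Sum.inl _ => 0
       | Sum.inr t' => if t' = t then 1 else 0) * ((gP G t).length - 1) + 1 := by
  have h1 : 1 ≤ (gP G t).length := List.length_pos_iff.2 (gP_ne G ht)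
  match s with
  | Sum.inl v => simp [substTok]
  | Sum.inr j =>
    by_cases hj : j = t
    · simp only [substTok, if_pos hj]
      omega
    · simp only [substTok, if_neg hj]
      simp

lemma inline_prod_a_len (ht : t < G.prods.length) (hcat : cnt G a t = 1) :
    (((gP G a).map (substTok G t)).flatten).length + 1 =
      (gP G a).length + (gP G t).length := by
  have h1 : 1 ≤ (gP G t).length := List.length_pos_iff.2 (gP_ne G ht)
  rw [List.length_flatten, List.map_map]
  have e2 : List.map (List.length ∘ substTok G t) (gP G a) =
      List.map (fun s =>
        (match s with
         | Sum.inl _ => 0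
         | Sum.inr t' => if t' = t then 1 else 0) * ((gP G t).length - 1) + 1) (gP G a) := by
    apply List.map_congr_left
    intro s _
    exact substTok_len G t ht s
  rw [e2, list_sum_map_add]
  have e3 : (List.map (fun s =>
      (match s with
       | Sum.inl _ => 0
       | Sum.inr t' => if t' = t then 1 else 0) * ((gP G t).length - 1)) (gP G a)).sum =
      cnt G a t * ((gP G t).length - 1) := by
    have e4 : List.map (fun s =>
        (match s with
         | Sum.inl _ => 0
         | Sum.inr t' => if t' = t then 1 else 0) * ((gP G t).length - 1)) (gP G a) =
        ((gP G a).map fun s =>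
          match s with
          | Sum.inl _ => 0
          | Sum.inr t' => if t' = t then 1 else 0).map fun x => x * ((gP G t).length - 1) := by
      rw [List.map_map]
      rfl
    rw [e4, list_sum_mul_right]
    rfl
  rw [e3, list_sum_map_one, hcat]
  omega

lemma inline_glen (ht : t < G.prods.length) (ha : a < t) (hcat : cnt G a t = 1) :
    ((inlineG G a t aV ht ha).prods.map List.length).sum =
      (G.prods.map List.length).sum := by
  classical
  rw [glen_eq, glen_eq, inline_length]
  have htm : t ∈ Finset.range G.prods.length := Finset.mem_range.2 ht
  have ham : a ∈ (Finset.range G.prods.length).erase t :=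
    Finset.mem_erase.2 ⟨by omega, Finset.mem_range.2 (by omega)⟩
  rw [← Finset.add_sum_erase _ (fun i => (gP (inlineG G a t aV ht ha) i).length) htm]
  rw [← Finset.add_sum_erase _ (fun i => (gP (inlineG G a t aV ht ha) i).length) ham]
  rw [← Finset.add_sum_erase _ (fun i => (gP G i).length) htm]
  rw [← Finset.add_sum_erase _ (fun i => (gP G i).length) ham]
  have hrest : ∑ i ∈ ((Finset.range G.prods.length).erase t).erase a,
      (gP (inlineG G a t aV ht ha) i).length =
      ∑ i ∈ ((Finset.range G.prods.length).erase t).erase a, (gP G i).length := by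
    apply Finset.sum_congr rfl
    intro i hi
    rw [Finset.mem_erase] at hi
    rcases hi with ⟨hia, hi⟩
    rw [Finset.mem_erase] at hi
    rw [gP_inline_other G a t aV ht ha hi.1 hia]
  rw [hrest]
  have hgt : gP (inlineG G a t aV ht ha) t = [Sum.inl aV] := by
    rw [gP_inline G a t aV ht ha ht, if_pos rfl]
  have hga : gP (inlineG G a t aV ht ha) a = ((gP G a).map (substTok G t)).flatten := by
    rw [gP_inline G a t aV ht ha (by omega), if_neg (by omega), if_pos rfl]
  rw [hgt, hga]
  have hkey := inline_prod_a_len G a t ht hcat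
  simp only [List.length_cons, List.length_nil]
  omega

lemma cnt_inline_a (ht : t < G.prods.length) (ha : a < t) (j : ℕ) (hjt : j ≠ t)
    (hat : Sum.inr t ∈ gP G a) :
    cnt G a j + cnt G t j ≤ cnt (inlineG G a t aV ht ha) a j := by
  have hga : gP (inlineG G a t aV ht ha) a = ((gP G a).map (substTok G t)).flatten := by
    rw [gP_inline G a t aV ht ha (by omega), if_neg (by omega), if_pos rfl]
  simp only [cnt]
  rw [hga, List.map_flatten, List.sum_flatten, List.map_map, List.map_map]
  have key : ∀ l : List (V ⊕ ℕ), Sum.inr t ∈ l →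
      (l.map fun s =>
        match s with
        | Sum.inl _ => 0
        | Sum.inr t' => if t' = j then 1 else 0).sum +
      ((gP G t).map fun s =>
        match s with
        | Sum.inl _ => 0
        | Sum.inr t' => if t' = j then 1 else 0).sum ≤
      (l.map (List.sum ∘ (List.map fun s =>
        match s with
        | Sum.inl _ => 0
        | Sum.inr t' => if t' = j then 1 else 0) ∘ substTok G t)).sum := by
    intro l hl
    induction l with
    | nil => simp at hl
    | cons s rest ih =>
      have hpoint : ∀ s' : V ⊕ ℕ,
          (match s' with
           | Sum.inl _ => 0
           | Sum.inr t' => if t' = j then 1 else 0) ≤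
          (List.sum ∘ (List.map fun s =>
            match s with
            | Sum.inl _ => 0
            | Sum.inr t' => if t' = j then 1 else 0) ∘ substTok G t) s' := by
        intro s'
        match s' with
        | Sum.inl v => exact Nat.zero_le _
        | Sum.inr j' =>
          by_cases hj' : j' = t
          · have hj'' : j' ≠ j := by omega
            simp only [if_neg hj'']
            exact Nat.zero_le _
          · show (if j' = j then 1 else 0) ≤ ((substTok G t (Sum.inr j')).map _).sum
            simp only [substTok, if_neg hj']
            simp
      rw [List.map_cons, List.sum_cons, List.map_cons, List.sum_cons]
      have hrest_bound : (rest.map fun s =>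
          match s with
          | Sum.inl _ => 0
          | Sum.inr t' => if t' = j then 1 else 0).sum ≤
          (rest.map (List.sum ∘ (List.map fun s =>
            match s with
            | Sum.inl _ => 0
            | Sum.inr t' => if t' = j then 1 else 0) ∘ substTok G t)).sum := by
        apply List.sum_le_sum
        intro x _
        exact hpoint x
      match s with
      | Sum.inl v =>
        have hl' : Sum.inr t ∈ rest := by
          rcases List.mem_cons.1 hl with h | h
          · exact absurd h (by simp)
          · exact h
        have := ih hl'
        have hp := hpoint (Sum.inl v)
        omega
      | Sum.inr j' =>
        by_cases hj' : j' = t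
        · have hhead : (List.sum ∘ (List.map fun s =>
              match s with
              | Sum.inl _ => 0
              | Sum.inr t' => if t' = j then 1 else 0) ∘ substTok G t) (Sum.inr j') =
              ((gP G t).map fun s =>
                match s with
                | Sum.inl _ => 0
                | Sum.inr t' => if t' = j then 1 else 0).sum := by
            show ((substTok G t (Sum.inr j')).map _).sum = _
            simp only [substTok, if_pos hj']
          have hj'' : j' ≠ j := by omega
          rw [hhead]
          simp only [if_neg hj'']
          omega
        · have hl' : Sum.inr t ∈ rest := by
            rcases List.mem_cons.1 hl with h | h
            · exfalso; apply hj'; injection h.symm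
            · exact h
          have := ih hl'
          have hp := hpoint (Sum.inr j')
          omega
  exact key (gP G a) hat

end Inline4

end GramAux

namespace GramAux

open List

variable {V : Type*}

section Inline5

variable (G : AdmissibleGrammar V) (a t : ℕ) (aV : V)

lemma rc_inline (ht : t < G.prods.length) (ha : a < t) (hRa : Reach G a)
    (hat : Sum.inr t ∈ gP G a)
    (huniq : ∀ i, i ≠ a → Reach G i → Sum.inr t ∉ gP G i)
    (j : ℕ) (hjt : j ≠ t) :
    rc G j ≤ rc (inlineG G a t aV ht ha) j := by
  classical
  rw [rc, rc, inline_length]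
  have htm : t ∈ Finset.range G.prods.length := Finset.mem_range.2 ht
  have ham : a ∈ (Finset.range G.prods.length).erase t :=
    Finset.mem_erase.2 ⟨by omega, Finset.mem_range.2 (by omega)⟩
  rw [← Finset.add_sum_erase _
    (fun m => if Reach (inlineG G a t aV ht ha) m then cnt (inlineG G a t aV ht ha) m j else 0) htm]
  rw [← Finset.add_sum_erase _
    (fun m => if Reach (inlineG G a t aV ht ha) m then cnt (inlineG G a t aV ht ha) m j else 0) ham]
  rw [← Finset.add_sum_erase _ (fun m => if Reach G m then cnt G m j else 0) htm]
  rw [← Finset.add_sum_erase _ (fun m => if Reach G m then cnt G m j else 0) ham]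
  have hrest : ∑ m ∈ ((Finset.range G.prods.length).erase t).erase a,
      (if Reach G m then cnt G m j else 0) ≤
      ∑ m ∈ ((Finset.range G.prods.length).erase t).erase a,
      (if Reach (inlineG G a t aV ht ha) m then cnt (inlineG G a t aV ht ha) m j else 0) := by
    apply Finset.sum_le_sum
    intro m hm
    rw [Finset.mem_erase] at hm
    rcases hm with ⟨hma, hm⟩
    rw [Finset.mem_erase] at hm
    have hceq : cnt (inlineG G a t aV ht ha) m j = cnt G m j :=
      cnt_congr (gP_inline_other G a t aV ht ha hm.1 hma)
    by_cases hR : Reach G m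
    · rw [if_pos hR, if_pos ((reach_orig_to_inline G a t aV ht ha hRa hat huniq m hR).1 hm.1),
        hceq]
    · rw [if_neg hR]
      exact Nat.zero_le _
  have hFt : (if Reach G t then cnt G t j else 0) ≤ cnt G t j := by
    by_cases hR : Reach G t
    · rw [if_pos hR]
    · rw [if_neg hR]; exact Nat.zero_le _
  have hFa : (if Reach G a then cnt G a j else 0) = cnt G a j := if_pos hRa
  have hFa' : (if Reach (inlineG G a t aV ht ha) a
      then cnt (inlineG G a t aV ht ha) a j else 0) = cnt (inlineG G a t aV ht ha) a j :=
    if_pos ((reach_orig_to_inline G a t aV ht ha hRa hat huniq a hRa).1 (by omega))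
  have hkey := cnt_inline_a G a t aV ht ha j hjt hat
  have hFt' : (0 : ℕ) ≤ (if Reach (inlineG G a t aV ht ha) t
      then cnt (inlineG G a t aV ht ha) t j else 0) := Nat.zero_le _
  omega

end Inline5

lemma inline_step (G : AdmissibleGrammar V) (t : ℕ) (ht1 : 1 ≤ t)
    (hRt : Reach G t) (hrct : rc G t ≤ 1) :
    ∃ G' : AdmissibleGrammar V,
      exp G' 0 = exp G 0 ∧
      (G'.prods.map List.length).sum = (G.prods.map List.length).sum ∧
      G'.prods.length = G.prods.length ∧
      ¬ Reach G' t ∧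
      (∀ m, Reach G' m → m ≠ t → Reach G m) ∧
      (∀ j, j ≠ t → rc G j ≤ rc G' j) := by
  classical
  have ht : t < G.prods.length := reach_lt G hRt
  obtain ⟨a, hRa, hat⟩ : ∃ a, Reach G a ∧ Sum.inr t ∈ gP G a := by
    cases hRt with
    | zero => omega
    | @step i j hRi hij => exact ⟨i, hRi, hij⟩
  have ha : a < t := (refs' G hat).1
  obtain ⟨aV, w', hw'⟩ := List.exists_cons_of_ne_nil (exp_ne_nil G (len_pos G))
  have huniq : ∀ i, i ≠ a → Reach G i → Sum.inr t ∉ gP G i := by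
    intro i hia hRi hmem
    have hiL : i < G.prods.length := reach_lt G hRi
    have haL : a < G.prods.length := by omega
    have hsub : ({a, i} : Finset ℕ) ⊆ Finset.range G.prods.length := by
      intro x hx
      rcases Finset.mem_insert.1 hx with rfl | hx
      · exact Finset.mem_range.2 haL
      · rw [Finset.mem_singleton] at hx
        exact hx ▸ Finset.mem_range.2 hiL
    have hpair : ∑ m ∈ ({a, i} : Finset ℕ), (if Reach G m then cnt G m t else 0) =
        (if Reach G a then cnt G a t else 0) + (if Reach G i then cnt G i t else 0) :=
      Finset.sum_pair (by omega)
    have hle : ∑ m ∈ ({a, i} : Finset ℕ), (if Reach G m then cnt G m t else 0) ≤ rc G t :=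
      Finset.sum_le_sum_of_subset hsub
    rw [hpair, if_pos hRa, if_pos hRi] at hle
    have h1 := cnt_pos_of_mem hat
    have h2 := cnt_pos_of_mem hmem
    omega
  have hcat : cnt G a t = 1 := by
    have h1 := cnt_pos_of_mem hat
    have h2 : cnt G a t ≤ rc G t := by
      have : (if Reach G a then cnt G a t else 0) ≤ rc G t := by
        apply Finset.single_le_sum (f := fun m => if Reach G m then cnt G m t else 0)
        · intro x _; exact Nat.zero_le _
        · exact Finset.mem_range.2 (by omega)
      rwa [if_pos hRa] at this
    omega
  refine ⟨inlineG G a t aV ht ha, ?_, ?_, ?_, ?_, ?_, ?_⟩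
  · exact exp_inline G a t aV ht ha hRa hat huniq G.prods.length 0 (by omega)
      Reach.zero (by omega)
  · exact inline_glen G a t aV ht ha hcat
  · exact inline_length G a t aV ht ha
  · exact not_reach_inline_t G a t aV ht ha hRa hat huniq
  · exact reach_inline_to_orig G a t aV ht ha hRa hat
  · exact fun j hjt => rc_inline G a t aV ht ha hRa hat huniq j hjt

open Classical in
/-- Reachable nonterminals ≥ 1 with at most one reachable occurrence. -/
noncomputable def Bad (G : AdmissibleGrammar V) : Finset ℕ :=
  (Finset.range G.prods.length).filter fun j => 1 ≤ j ∧ Reach G j ∧ rc G j ≤ 1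

lemma reduce : ∀ (n : ℕ) (G : AdmissibleGrammar V), (Bad G).card ≤ n →
    ∃ G' : AdmissibleGrammar V, exp G' 0 = exp G 0 ∧
      (G'.prods.map List.length).sum ≤ (G.prods.map List.length).sum ∧
      ∀ j, 1 ≤ j → Reach G' j → 2 ≤ rc G' j := by
  classical
  have hempty : ∀ G : AdmissibleGrammar V, Bad G = ∅ →
      ∃ G' : AdmissibleGrammar V, exp G' 0 = exp G 0 ∧
      (G'.prods.map List.length).sum ≤ (G.prods.map List.length).sum ∧
      ∀ j, 1 ≤ j → Reach G' j → 2 ≤ rc G' j := by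
    intro G hB
    refine ⟨G, rfl, le_rfl, ?_⟩
    intro j hj1 hRj
    have hjL : j < G.prods.length := reach_lt G hRj
    by_contra hrc
    have : j ∈ Bad G := by
      rw [Bad, Finset.mem_filter]
      exact ⟨Finset.mem_range.2 hjL, hj1, hRj, by omega⟩
    rw [hB] at this
    simp at this
  intro n
  induction n with
  | zero =>
    intro G hc
    exact hempty G (Finset.card_eq_zero.1 (by omega))
  | succ n ih =>
    intro G hc
    by_cases hB : Bad G = ∅
    · exact hempty G hB
    · obtain ⟨t, htB⟩ := Finset.nonempty_iff_ne_empty.2 hB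
      have htB' := htB
      rw [Bad, Finset.mem_filter] at htB'
      obtain ⟨htr, ht1, hRt, hrct⟩ := htB'
      obtain ⟨G', hexp, hglen, hlen, hnR, hR1, hrc⟩ := inline_step G t ht1 hRt hrct
      have hsub : Bad G' ⊆ (Bad G).erase t := by
        intro j hj
        rw [Bad, Finset.mem_filter] at hj
        obtain ⟨hjr, hj1, hRj, hrcj⟩ := hj
        rw [hlen] at hjr
        have hjt : j ≠ t := by
          intro h
          exact hnR (h ▸ hRj)
        rw [Finset.mem_erase]
        refine ⟨hjt, ?_⟩
        rw [Bad, Finset.mem_filter]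
        refine ⟨hjr, hj1, hR1 j hRj hjt, ?_⟩
        have := hrc j hjt
        omega
      have hcard : (Bad G').card ≤ n := by
        have h1 : (Bad G').card ≤ ((Bad G).erase t).card := Finset.card_le_card hsub
        have h2 : ((Bad G).erase t).card = (Bad G).card - 1 :=
          Finset.card_erase_of_mem htB
        have h3 : 1 ≤ (Bad G).card := Finset.card_pos.2 ⟨t, htB⟩
        omega
      obtain ⟨G'', hexp'', hglen'', hred''⟩ := ih G' hcard
      exact ⟨G'', hexp''.trans hexp, by omega, hred''⟩

end GramAux

namespace GramAux

open List

variable {V : Type*}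

lemma cut (G : AdmissibleGrammar V) :
    ∀ k i, G.prods.length - i ≤ k → i < G.prods.length → Reach G i →
    ∀ n, 1 ≤ n → n ≤ (exp G i).length →
    ∃ T : List (V ⊕ ℕ),
      (∀ t, Sum.inr t ∈ T → i < t ∧ t < G.prods.length) ∧
      expFlat G T = (exp G i).take n ∧
      (T.length ≤ (gP G i).length ∨
        ∃ t n', Reach G t ∧ i < t ∧ t < G.prods.length ∧ 1 ≤ n' ∧
          n' + 1 ≤ (exp G t).length ∧ T.length + 1 ≤ (gP G i).length + n') := by
  intro k
  induction k with
  | zero => intro i h1 hi; omega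
  | succ k ih =>
    intro i h1 hi hRi n hn1 hn2
    have hexp : exp G i = expFlat G (gP G i) := exp_unfold G hi
    have cutlist : ∀ ts : List (V ⊕ ℕ),
        (∀ t, Sum.inr t ∈ ts → (i < t ∧ t < G.prods.length) ∧ Reach G t) →
        ∀ n, 1 ≤ n → n ≤ (expFlat G ts).length →
        ∃ T : List (V ⊕ ℕ),
          (∀ t, Sum.inr t ∈ T → i < t ∧ t < G.prods.length) ∧
          expFlat G T = (expFlat G ts).take n ∧
          (T.length ≤ ts.length ∨
            ∃ t n', Reach G t ∧ i < t ∧ t < G.prods.length ∧ 1 ≤ n' ∧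
              n' + 1 ≤ (exp G t).length ∧ T.length + 1 ≤ ts.length + n') := by
      intro ts
      induction ts with
      | nil =>
        intro _ n hn1 hn2
        simp at hn2
        omega
      | cons s rest ihts =>
        intro hts n hn1 hn2
        have hbpos : 1 ≤ (expTok G s).length := by
          apply expTok_len_pos
          intro t hst
          exact (hts t (by rw [← hst]; exact List.mem_cons_self)).1.2
        by_cases hnb : n ≤ (expTok G s).length
        · by_cases hne : n = (expTok G s).length
          · refine ⟨[s], ?_, ?_, Or.inl (by simp)⟩
            · intro t ht
              rw [List.mem_singleton] at ht
              exact (hts t (by rw [← ht]; exact List.mem_cons_self)).1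
            · have h0 : expFlat G [s] = expTok G s := by simp
              rw [h0, expFlat_cons, hne, List.take_left]
          · have hlt : n < (expTok G s).length := by omega
            match s with
            | Sum.inl a =>
              exfalso
              have : (expTok G (Sum.inl a)).length = 1 := rfl
              omega
            | Sum.inr t =>
              obtain ⟨⟨hit, htL⟩, hRt⟩ := hts t (List.mem_cons_self)
              have hbt : expTok G (Sum.inr t) = exp G t := rfl
              obtain ⟨T', hrefs', hflat', _⟩ := ih t (by omega) htL hRt n hn1
                (by rw [hbt] at hnb; exact hnb)
              have hTlen : T'.length ≤ n := by
                have := length_le_expFlat G T' (fun t' ht' => (hrefs' t' ht').2)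
                rw [hflat', List.length_take] at this
                omega
              refine ⟨T', ?_, ?_, Or.inr ⟨t, n, hRt, hit, htL, hn1, ?_, ?_⟩⟩
              · intro t' ht'
                obtain ⟨ha, hb⟩ := hrefs' t' ht'
                exact ⟨by omega, hb⟩
              · rw [expFlat_cons, List.take_append,
                  show n - (expTok G (Sum.inr t)).length = 0 by omega,
                  List.take_zero, List.append_nil, hbt]
                exact hflat'
              · rw [hbt] at hlt; omega
              · rw [List.length_cons]; omega
        · obtain ⟨T_r, hrefr, hflatr, hbr⟩ :=
            ihts (fun t ht => hts t (List.mem_cons_of_mem _ ht))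
              (n - (expTok G s).length) (by omega)
              (by rw [expFlat_cons, List.length_append] at hn2; omega)
          refine ⟨s :: T_r, ?_, ?_, ?_⟩
          · intro t ht
            rcases List.mem_cons.1 ht with h | h
            · exact (hts t (by rw [← h]; exact List.mem_cons_self)).1
            · exact hrefr t h
          · rw [expFlat_cons, expFlat_cons, List.take_append,
              List.take_of_length_le (show (expTok G s).length ≤ n by omega), hflatr]
          · rcases hbr with h | ⟨t, n', p1, p2, p3, p4, p5, p6⟩
            · left
              rw [List.length_cons, List.length_cons]
              omega
            · right
              exact ⟨t, n', p1, p2, p3, p4, p5, by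
                rw [List.length_cons, List.length_cons]; omega⟩
    have hconds : ∀ t, Sum.inr t ∈ gP G i →
        ((i < t ∧ t < G.prods.length) ∧ Reach G t) :=
      fun t ht => ⟨refs' G ht, Reach.step hRi ht⟩
    obtain ⟨T, hT1, hT2, hT3⟩ := cutlist (gP G i) hconds n hn1 (by rw [← hexp]; exact hn2)
    refine ⟨T, hT1, ?_, hT3⟩
    rw [hexp]
    exact hT2

end GramAux

namespace GramAux

open List

variable {V : Type*}

lemma expandStr_succ' (prods : List (List (V ⊕ ℕ))) (k : ℕ) (g : List (V ⊕ ℕ)) :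
    expandStr prods (k+1) g =
      (g.map fun s =>
        match s with
        | Sum.inl a => [a]
        | Sum.inr j => expandStr prods k (prods.getD j [])).flatten := rfl

lemma lgtOne_bdd (w : List V) :
    BddAbove {n | ∃ w' : List V, w'.length = n ∧
      ∃ i j : ℕ, i ≠ j ∧ w' <+: w.drop i ∧ w' <+: w.drop j} := by
  refine ⟨w.length, ?_⟩
  rintro n ⟨w', rfl, i, j, hij, h1, _⟩
  have := h1.length_le
  rw [List.length_drop] at this
  omega

lemma le_lgtOne {w x : List V} {q1 q2 : ℕ} (hq : q1 ≠ q2)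
    (h1 : x <+: w.drop q1) (h2 : x <+: w.drop q2) : x.length ≤ LgtOne w :=
  le_csSup (lgtOne_bdd w) ⟨x, rfl, q1, q2, hq, h1, h2⟩

lemma lgtOne_nonempty (w : List V) :
    {n | ∃ w' : List V, w'.length = n ∧
      ∃ i j : ℕ, i ≠ j ∧ w' <+: w.drop i ∧ w' <+: w.drop j}.Nonempty :=
  ⟨0, [], rfl, 0, 1, by omega, List.nil_prefix, List.nil_prefix⟩

lemma prefix_bound (G : AdmissibleGrammar V) (v u : List V)
    (hv : v ≠ []) (hu : u ≠ []) (hw : exp G 0 = v ++ u)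
    (hred : ∀ j, 1 ≤ j → Reach G j → 2 ≤ rc G j) :
    ∃ G2 : AdmissibleGrammar V, G2.expansion = v ∧
      (G2.prods.map List.length).sum ≤
        (G.prods.map List.length).sum + LgtOne (v ++ u) := by
  have hL := len_pos G
  have hn1 : 1 ≤ v.length := List.length_pos_iff.2 hv
  have hn2 : v.length ≤ (exp G 0).length := by
    rw [hw, List.length_append]; omega
  obtain ⟨T, hrefs, hflat, hbound⟩ :=
    cut G G.prods.length 0 (by omega) hL Reach.zero v.length hn1 hn2
  have hTv : expFlat G T = v := by rw [hflat, hw, List.take_left]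
  have hTne : T ≠ [] := by
    intro h
    rw [h] at hTv
    exact hv hTv.symm
  have hTbound : T.length ≤ (gP G 0).length + LgtOne (v ++ u) := by
    rcases hbound with h | ⟨t, n', hRt, h0t, htL, hn'1, hn'2, hb⟩
    · exact le_trans h (Nat.le_add_right _ _)
    · obtain ⟨q1, q2, hq, hp1, hp2⟩ := two_pos G (by omega) htL (hred t (by omega) hRt)
      have hx1 : (exp G t).take n' <+: (exp G 0).drop q1 :=
        (List.take_prefix _ _).trans hp1
      have hx2 : (exp G t).take n' <+: (exp G 0).drop q2 :=
        (List.take_prefix _ _).trans hp2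
      rw [hw] at hx1 hx2
      have hlen : ((exp G t).take n').length = n' := by
        rw [List.length_take]; omega
      have := le_lgtOne hq hx1 hx2
      omega
  rcases List.exists_cons_of_ne_nil G.prods_ne with ⟨g0, rest, hps⟩
  have hg0 : gP G 0 = g0 := by rw [gP, hps]; rfl
  have hlenL : (T :: rest).length = G.prods.length := by rw [hps]; rfl
  refine ⟨⟨T :: rest, by simp, ?_, ?_⟩, ?_, ?_⟩
  · intro g hg
    rcases List.mem_cons.1 hg with rfl | hgr
    · exact hTne
    · exact G.prod_ne g (by rw [hps]; exact List.mem_cons_of_mem _ hgr)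
  · intro i hiL j hj
    cases i with
    | zero =>
      have hj' : Sum.inr j ∈ T := hj
      obtain ⟨h1', h2'⟩ := hrefs j hj'
      exact ⟨h1', by rw [hlenL]; exact h2'⟩
    | succ i' =>
      have hj' : Sum.inr j ∈ gP G (i' + 1) := by
        rw [gP, hps]
        simpa [List.getD_cons_succ] using hj
      obtain ⟨h1', h2'⟩ := refs' G hj'
      exact ⟨h1', by rw [hlenL]; exact h2'⟩
  · show expandStr (T :: rest) (T :: rest).length ((T :: rest).getD 0 []) = v
    rw [hlenL]
    have hrefs' : ∀ t, Sum.inr t ∈ T → 1 ≤ t ∧ t < G.prods.length := by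
      intro t ht
      obtain ⟨h1', h2'⟩ := hrefs t ht
      exact ⟨by omega, h2'⟩
    have sameExpand : ∀ fuel (g : List (V ⊕ ℕ)),
        (∀ t, Sum.inr t ∈ g → 1 ≤ t ∧ t < G.prods.length) →
        expandStr (T :: rest) fuel g = expandStr G.prods fuel g := by
      intro fuel
      induction fuel with
      | zero => intro g _; rfl
      | succ f ihf =>
        intro g hg
        rw [expandStr_succ', expandStr_succ']
        congr 1
        apply List.map_congr_left
        intro s hs
        match s with
        | Sum.inl a => rfl
        | Sum.inr t =>
          obtain ⟨ht1, htL⟩ := hg t hs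
          show expandStr (T :: rest) f ((T :: rest).getD t []) =
            expandStr G.prods f (G.prods.getD t [])
          have hgetD : (T :: rest).getD t [] = G.prods.getD t [] := by
            match t with
            | 0 => omega
            | t' + 1 =>
              rw [hps]
              simp [List.getD_cons_succ]
          rw [hgetD]
          apply ihf
          intro t' ht'
          obtain ⟨h1', h2'⟩ := refs' G (ht' : Sum.inr t' ∈ gP G t)
          exact ⟨by omega, h2'⟩
    show expandStr (T :: rest) G.prods.length T = v
    rw [sameExpand _ T hrefs']
    rw [expandStr_eq_expFlat G (i := 0) (fun t ht => hrefs t ht) G.prods.length hL (by omega)]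
    exact hTv
  · show ((T :: rest).map List.length).sum ≤ _
    rw [List.map_cons, List.sum_cons]
    have hsum : (G.prods.map List.length).sum = g0.length + (rest.map List.length).sum := by
      rw [hps]; simp
    rw [hg0] at hTbound
    omega

lemma flatten_singleton_map (w : List V) : (w.map fun a => ([a] : List V)).flatten = w := by
  induction w with
  | nil => rfl
  | cons a w ih => simp [ih]

/-- The trivial grammar for `w`. -/
def trivialG (w : List V) (hw : w ≠ []) : AdmissibleGrammar V where
  prods := [w.map Sum.inl]
  prods_ne := by simp
  prod_ne := by
    intro g hg
    rw [List.mem_singleton] at hg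
    rw [hg]
    intro h
    exact hw (List.map_eq_nil_iff.1 h)
  refs := by
    intro i hi j hj
    simp only [List.length_singleton] at hi
    have hi0 : i = 0 := by omega
    rw [hi0] at hj
    have : Sum.inr j ∈ w.map Sum.inl := hj
    rcases List.mem_map.1 this with ⟨a, _, ha⟩
    cases ha

lemma trivialG_isFor (w : List V) (hw : w ≠ []) : (trivialG w hw).IsFor w := by
  show expandStr [w.map Sum.inl] 1 (w.map Sum.inl) = w
  rw [expandStr_succ', List.map_map]
  exact flatten_singleton_map w

lemma lm_spec {w : List V} (hw : w ≠ []) :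
    ∃ G : AdmissibleGrammar V, G.IsFor w ∧ G.len = Lm w := by
  have hne : {n | ∃ G : AdmissibleGrammar V, G.IsFor w ∧ G.len = n}.Nonempty :=
    ⟨(trivialG w hw).len, trivialG w hw, trivialG_isFor w hw, rfl⟩
  exact Nat.sInf_mem hne

lemma lm_le {w : List V} (G : AdmissibleGrammar V) (h : G.IsFor w) : Lm w ≤ G.len :=
  Nat.sInf_le ⟨G, h, rfl⟩

lemma main_prefix (v u : List V) (hv : v ≠ []) (hu : u ≠ []) :
    Lm v ≤ Lm (v ++ u) + LgtOne (v ++ u) := by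
  obtain ⟨G0, hfor, hlen⟩ := lm_spec (show v ++ u ≠ [] by simp [hv])
  obtain ⟨G1, hexp1, hglen1, hred⟩ := reduce (Bad G0).card G0 le_rfl
  have hw1 : exp G1 0 = v ++ u := by
    rw [hexp1]
    exact hfor
  obtain ⟨G2, hfor2, hbound⟩ := prefix_bound G1 v u hv hu hw1 hred
  have h1 : Lm v ≤ G2.len := lm_le G2 hfor2
  have h2 : G2.len = (G2.prods.map List.length).sum := rfl
  have h3 : G0.len = (G0.prods.map List.length).sum := rfl
  omega

end GramAux

namespace GramAux

open List

variable {V : Type*}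

lemma getD_map_rev (prods : List (List (V ⊕ ℕ))) (t : ℕ) :
    (prods.map List.reverse).getD t [] = (prods.getD t []).reverse := by
  have := List.getD_map prods ([] : List (V ⊕ ℕ)) (n := t) List.reverse
  simpa using this

lemma expandStr_rev (prods : List (List (V ⊕ ℕ))) :
    ∀ fuel (g : List (V ⊕ ℕ)),
      expandStr (prods.map List.reverse) fuel g.reverse =
        (expandStr prods fuel g).reverse := by
  intro fuel
  induction fuel with
  | zero => intro g; rfl
  | succ f ih =>
    intro g
    rw [expandStr_succ', expandStr_succ']
    rw [List.map_reverse, List.reverse_flatten, List.map_map]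
    congr 2
    apply List.map_congr_left
    intro s _
    match s with
    | Sum.inl a => rfl
    | Sum.inr t =>
      show expandStr (prods.map List.reverse) f ((prods.map List.reverse).getD t []) =
        (expandStr prods f (prods.getD t [])).reverse
      rw [getD_map_rev, ih]

/-- The reversed grammar. -/
def revG (G : AdmissibleGrammar V) : AdmissibleGrammar V where
  prods := G.prods.map List.reverse
  prods_ne := by
    intro h
    exact G.prods_ne (List.map_eq_nil_iff.1 h)
  prod_ne := by
    intro g hg
    rcases List.mem_map.1 hg with ⟨g', hg', rfl⟩
    simp only [ne_eq, List.reverse_eq_nil_iff]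
    exact G.prod_ne g' hg'
  refs := by
    intro i hi j hj
    rw [List.length_map] at hi
    rw [getD_map_rev, List.mem_reverse] at hj
    have := G.refs i hi j hj
    rw [List.length_map]
    exact this

lemma revG_expansion (G : AdmissibleGrammar V) :
    (revG G).expansion = G.expansion.reverse := by
  show expandStr (G.prods.map List.reverse) (G.prods.map List.reverse).length
    ((G.prods.map List.reverse).getD 0 []) = _
  rw [List.length_map, getD_map_rev, expandStr_rev]
  rfl

lemma revG_len (G : AdmissibleGrammar V) : (revG G).len = G.len := by
  show ((G.prods.map List.reverse).map List.length).sum = (G.prods.map List.length).sum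
  rw [List.map_map]
  have : List.map (List.length ∘ List.reverse) G.prods = List.map List.length G.prods :=
    List.map_congr_left (fun g _ => List.length_reverse)
  rw [this]

lemma lm_rev_le (w : List V) (hw : w ≠ []) : Lm w.reverse ≤ Lm w := by
  obtain ⟨G, hfor, hlen⟩ := lm_spec hw
  have hfor' : (revG G).IsFor w.reverse := by
    show (revG G).expansion = w.reverse
    rw [revG_expansion]
    exact congrArg List.reverse (hfor : G.expansion = w)
  calc Lm w.reverse ≤ (revG G).len := lm_le _ hfor'
    _ = G.len := revG_len G
    _ = Lm w := hlen

lemma rev_occ {w x : List V} {q : ℕ} (h : x <+: w.drop q) (hx : x ≠ []) :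
    x.reverse <+: w.reverse.drop (w.length - x.length - q) ∧
      q + x.length ≤ w.length := by
  obtain ⟨z, hz⟩ := h
  have hdq : w.drop q ≠ [] := by
    intro h0
    rw [h0] at hz
    rcases List.append_eq_nil_iff.1 hz with ⟨h1, _⟩
    exact hx h1
  have hq : q < w.length := by
    by_contra hq
    exact hdq (List.drop_eq_nil_of_le (by omega))
  have hwq : w = w.take q ++ (x ++ z) := by
    rw [hz]
    exact (List.take_append_drop q w).symm
  have hlen : w.length = q + x.length + z.length := by
    conv_lhs => rw [hwq]
    rw [List.length_append, List.length_append, List.length_take]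
    omega
  constructor
  swap
  · omega
  · have hrev : w.reverse = z.reverse ++ (x.reverse ++ (w.take q).reverse) := by
      conv_lhs => rw [hwq]
      rw [List.reverse_append, List.reverse_append, List.append_assoc]
    have hidx : w.length - x.length - q = z.reverse.length := by
      rw [List.length_reverse]
      omega
    rw [hidx, hrev, List.drop_left]
    exact ⟨(w.take q).reverse, rfl⟩

lemma lgtOne_le_rev (w : List V) : LgtOne w ≤ LgtOne w.reverse := by
  apply csSup_le (lgtOne_nonempty w)
  rintro n ⟨x, rfl, i, j, hij, h1, h2⟩
  by_cases hx : x = []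
  · subst hx
    exact Nat.zero_le _
  · obtain ⟨hp1, hb1⟩ := rev_occ h1 hx
    obtain ⟨hp2, hb2⟩ := rev_occ h2 hx
    have hne : w.length - x.length - i ≠ w.length - x.length - j := by omega
    have := le_lgtOne hne hp1 hp2
    rwa [List.length_reverse] at this

lemma lgtOne_rev (w : List V) : LgtOne w.reverse = LgtOne w := by
  apply Nat.le_antisymm
  · have := lgtOne_le_rev w.reverse
    rwa [List.reverse_reverse] at this
  · exact lgtOne_le_rev w

end GramAux


/-- For all nonempty strings `v` and `u`, the lengths of the shortest
admissible grammars satisfy `L^m(v) ≤ L^m(vu) + L^{>1}(vu)` and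
`L^m(u) ≤ L^m(vu) + L^{>1}(vu)`. -/
theorem shortest_grammar_of_factor_le {V : Type*} [Fintype V]
    (v u : List V) (hv : v ≠ []) (hu : u ≠ []) :
    Lm v ≤ Lm (v ++ u) + LgtOne (v ++ u) ∧
      Lm u ≤ Lm (v ++ u) + LgtOne (v ++ u) := by
  constructor
  · exact GramAux.main_prefix v u hv hu
  · have h1 : Lm u ≤ Lm u.reverse := by
      have := GramAux.lm_rev_le u.reverse (by simp [hu])
      rwa [List.reverse_reverse] at this
    have h2 : Lm u.reverse ≤ Lm (u.reverse ++ v.reverse) + LgtOne (u.reverse ++ v.reverse) :=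
      GramAux.main_prefix _ _ (by simp [hu]) (by simp [hv])
    have h3 : u.reverse ++ v.reverse = (v ++ u).reverse := List.reverse_append.symm
    rw [h3] at h2
    have h4 : Lm (v ++ u).reverse ≤ Lm (v ++ u) := GramAux.lm_rev_le _ (by simp [hv])
    have h5 : LgtOne (v ++ u).reverse = LgtOne (v ++ u) := GramAux.lgtOne_rev _
    omega
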